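/- Let P₄ be the path with vertices a, b, c, d and edges ab, bc, cd, so A(P₄) = ⟨a,b,c,d ∣ [a,b], [b,c], [c,d]⟩. Then the elements bc and d generate a free subgroup of rank 2 of A(P₄); that is, the homomorphism from the free group F₂ on two generators to A(P₄) sending the first generator to bc and the second generator to d is injective. -/

import Mathlib

open scoped commutatorElement

/-- The defining relators of the right-angled Artin group on a simple graph `G`:
the commutators of the generators corresponding to adjacent vertices. -/
def raagRels {V : Type*} (G : SimpleGraph V) : Set (FreeGroup V) :=
  {r | ∃ u v : V, G.Adj u v ∧ r = ⁅FreeGroup.of u, FreeGroup.of v⁆}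

/-- The right-angled Artin group on a simple graph `G`. -/
abbrev RAAG {V : Type*} (G : SimpleGraph V) : Type _ := PresentedGroup (raagRels G)

/-- The generator of the right-angled Artin group corresponding to a vertex. -/
def gen {V : Type*} (G : SimpleGraph V) (v : V) : RAAG G := PresentedGroup.of v

/-- Vertices of the path P₄. -/
inductive VP : Type | a | b | c | d
deriving DecidableEq

/-- The path graph P₄ with edges ab, bc, cd. -/
def P4 : SimpleGraph VP := SimpleGraph.fromRel (fun u v => (u, v) ∈
  ([(.a,.b),(.b,.c),(.c,.d)] : List (VP × VP)))

/-- The retraction target map: a ↦ 1, b ↦ x₀, c ↦ 1, d ↦ x₁. -/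
def retMap : VP → FreeGroup (Fin 2)
  | .a => 1
  | .b => FreeGroup.of 0
  | .c => 1
  | .d => FreeGroup.of 1

lemma retMap_rels : ∀ r ∈ raagRels P4, FreeGroup.lift retMap r = 1 := by
  rintro r ⟨u, v, hadj, rfl⟩
  have : retMap u = 1 ∨ retMap v = 1 := by
    rcases hadj with ⟨hne, h | h⟩ <;>
      simp only [List.mem_cons, List.mem_singleton, Prod.mk.injEq, List.not_mem_nil,
        or_false] at h <;>
      rcases h with ⟨rfl, rfl⟩ | ⟨rfl, rfl⟩ | ⟨rfl, rfl⟩ <;> simp [retMap]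
  simp only [map_commutatorElement, FreeGroup.lift_apply_of]
  rcases this with h | h <;> simp [commutatorElement_def, h]

/-- The retraction homomorphism A(P₄) → F₂. -/
def retHom : RAAG P4 →* FreeGroup (Fin 2) := PresentedGroup.toGroup retMap_rels

lemma retHom_gen (v : VP) : retHom (gen P4 v) = retMap v :=
  PresentedGroup.toGroup.of retMap_rels

/-- The elements `bc` and `d` generate a free subgroup of rank 2 in `A(P₄)`: the
homomorphism `F₂ → A(P₄)` sending the first generator to `bc` and the second to `d` is
injective. -/
theorem bc_d_generate_free_group :
    Function.Injective
      (FreeGroup.lift ![gen P4 VP.b * gen P4 VP.c, gen P4 VP.d] :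
        FreeGroup (Fin 2) →* RAAG P4) := by
  have key : retHom.comp
      (FreeGroup.lift ![gen P4 VP.b * gen P4 VP.c, gen P4 VP.d]) =
      MonoidHom.id (FreeGroup (Fin 2)) := by
    apply FreeGroup.ext_hom
    intro i
    fin_cases i <;>
      simp [retHom_gen, retMap]
  have lh : Function.LeftInverse retHom
      (FreeGroup.lift ![gen P4 VP.b * gen P4 VP.c, gen P4 VP.d]) :=
    fun x => DFunLike.congr_fun key x
  exact lh.injective
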